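/- For positive integers n, p, k with k ≤ n, the number (n choose k) · Σ_{r≥0} C(p,r)·C(n-p,r)·C(k-1,r)/C(n-1,r) equals (n/k) · Σ_{r≥0} C(p,r)·C(n-p,r)·C(n-r-1,k-r-1). -/

import Mathlib

open Finset

/-- Binomial coefficient `C(a,b)` for integers, with `C(a,b) = 0` unless `0 ≤ b ≤ a`. -/
def C (a b : ℤ) : ℚ := if 0 ≤ b ∧ b ≤ a then (Nat.choose a.toNat b.toNat : ℚ) else 0

/-- `B(n,p,k) = (n/k) · Σ_{r≥0} C(p,r)·C(n-p,r)·C(n-r-1,k-r-1)`. -/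
def B (n p k : ℕ) : ℚ :=
  ((n : ℚ) / k) * ∑ r ∈ range (n + 1),
    C p r * C ((n : ℤ) - p) r * C ((n : ℤ) - r - 1) ((k : ℤ) - r - 1)

lemma key_nat (m j r : ℕ) (hjm : j ≤ m) (hr : r ≤ j) :
    ((m+1).choose (j+1) : ℚ) * (j.choose r / m.choose r) =
      ((m+1 : ℚ)/(j+1)) * ((m-r).choose (j-r)) := by
  have hrm : r ≤ m := hr.trans hjm
  have hjr : j - r ≤ m - r := Nat.sub_le_sub_right hjm r
  rw [Nat.cast_choose ℚ (Nat.succ_le_succ hjm), Nat.cast_choose ℚ hr,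
    Nat.cast_choose ℚ hrm, Nat.cast_choose ℚ hjr]
  have h1 : (m+1) - (j+1) = m - j := by omega
  have h2 : (m - r) - (j - r) = m - j := by omega
  rw [h1, h2, Nat.factorial_succ m, Nat.factorial_succ j]
  have f1 : (r.factorial : ℚ) ≠ 0 := by exact_mod_cast r.factorial_ne_zero
  have f2 : ((j-r).factorial : ℚ) ≠ 0 := by exact_mod_cast (j-r).factorial_ne_zero
  have f3 : ((m-j).factorial : ℚ) ≠ 0 := by exact_mod_cast (m-j).factorial_ne_zero
  have f4 : ((m-r).factorial : ℚ) ≠ 0 := by exact_mod_cast (m-r).factorial_ne_zero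
  have f5 : (j.factorial : ℚ) ≠ 0 := by exact_mod_cast j.factorial_ne_zero
  have f6 : (m.factorial : ℚ) ≠ 0 := by exact_mod_cast m.factorial_ne_zero
  have f7 : ((j:ℚ)+1) ≠ 0 := by positivity
  push_cast
  field_simp

lemma C_cast (a b : ℕ) (h : b ≤ a) : C a b = (a.choose b : ℚ) := by
  simp [C, h]

theorem stmt_0 (n p k : ℕ) (hk : 1 ≤ k) (hkn : k ≤ n) (hp : p ≤ n) :
    (Nat.choose n k : ℚ) * ∑ r ∈ range (n + 1),
      C p r * C ((n : ℤ) - p) r * (C ((k : ℤ) - 1) r / C ((n : ℤ) - 1) r) =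
    ((n : ℚ) / k) * ∑ r ∈ range (n + 1),
      C p r * C ((n : ℤ) - p) r * C ((n : ℤ) - r - 1) ((k : ℤ) - r - 1) := by
  obtain ⟨j, rfl⟩ : ∃ j, k = j + 1 := ⟨k - 1, by omega⟩
  obtain ⟨m, rfl⟩ : ∃ m, n = m + 1 := ⟨n - 1, by omega⟩
  have hjm : j ≤ m := by omega
  rw [mul_sum, mul_sum]
  refine sum_congr rfl fun r hr => ?_
  rw [mem_range, Nat.lt_succ_iff] at hr
  by_cases hrk : r ≤ j
  · have h1 : (Nat.cast (j + 1) : ℤ) - 1 = ((j : ℕ) : ℤ) := by push_cast; ring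
    have h2 : (Nat.cast (m + 1) : ℤ) - 1 = ((m : ℕ) : ℤ) := by push_cast; ring
    have h3 : (Nat.cast (m + 1) : ℤ) - r - 1 = ((m - r : ℕ) : ℤ) := by
      rw [Nat.cast_sub (hrk.trans hjm)]; push_cast; ring
    have h4 : (Nat.cast (j + 1) : ℤ) - r - 1 = ((j - r : ℕ) : ℤ) := by
      rw [Nat.cast_sub hrk]; push_cast; ring
    rw [h1, h2, h3, h4, C_cast j r hrk, C_cast m r (hrk.trans hjm),
      C_cast (m - r) (j - r) (Nat.sub_le_sub_right hjm r)]
    have key := key_nat m j r hjm hrk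
    push_cast at key ⊢
    linear_combination (C p r * C ((m : ℤ) + 1 - p) r) * key
  · have c1 : C ((Nat.cast (j + 1) : ℤ) - 1) r = 0 := by
      rw [C, if_neg]; omega
    have c2 : C ((Nat.cast (m + 1) : ℤ) - r - 1) ((Nat.cast (j + 1) : ℤ) - r - 1) = 0 := by
      rw [C, if_neg]; omega
    rw [c1, c2]
    simp
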